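/- Let X be a metric space and let k, l ∈ ℕ. Suppose there exist metric spaces Y and Z together with isometric equivalences X ≃ ℝᵏ ×₂ Y and X ≃ ℝˡ ×₂ Z, where ℝᵏ = EuclideanSpace ℝ (Fin k) and ×₂ is the ℓ²-product. Then there exist a natural number m with k ≤ m and l ≤ m, and a metric space W, such that X is isometric to ℝᵐ ×₂ W, Y is isometric to ℝ^{m−k} ×₂ W, and Z is isometric to ℝ^{m−l} ×₂ W. (This expresses Kleiner–Lott, 'Locally Collapsed 3-Manifolds', Lemma 4.3, part (2): any two splittings of a metric space are compatible with a third splitting.) -/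

import Mathlib

open scoped RealInnerProductSpace ENNReal
noncomputable section

universe u

variable {α β : Type*}

section helpers
variable [MetricSpace α] [MetricSpace β]

theorem pdist (x y : WithLp 2 (α × β)) :
    dist x y = Real.sqrt (dist x.ofLp.1 y.ofLp.1 ^ 2 + dist x.ofLp.2 y.ofLp.2 ^ 2) := by
  rw [WithLp.prod_dist_eq_add (p := 2) (by norm_num)]
  rw [show ((2:ℝ≥0∞)).toReal = (2:ℝ) by norm_num]
  rw [Real.sqrt_eq_rpow]
  norm_num

theorem pdist_sq (x y : WithLp 2 (α × β)) :
    dist x y ^ 2 = dist x.ofLp.1 y.ofLp.1 ^ 2 + dist x.ofLp.2 y.ofLp.2 ^ 2 := by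
  rw [pdist, Real.sq_sqrt (by positivity)]

theorem wext {x y : WithLp 2 (α × β)} (h1 : x.ofLp.1 = y.ofLp.1) (h2 : x.ofLp.2 = y.ofLp.2) : x = y :=
  congrArg (WithLp.toLp 2) (Prod.ext h1 h2)

@[simp] theorem wEta (x : WithLp 2 (α × β)) : WithLp.toLp 2 (x.fst, x.snd) = x := rfl

end helpers

theorem eq_of_sq_eq {a b : ℝ} (ha : 0 ≤ a) (hb : 0 ≤ b) (h : a ^ 2 = b ^ 2) : a = b := by
  nlinarith

theorem le_of_sq_le {a b : ℝ} (hb : 0 ≤ b) (h : a ^ 2 ≤ b ^ 2) (ha : 0 ≤ a) : a ≤ b := by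
  nlinarith


section isos
variable [MetricSpace α] [MetricSpace β]

/-- Build an isometry equiv from an equiv preserving squared distances. -/
def isoMk {γ δ : Type*} [MetricSpace γ] [MetricSpace δ] (e : γ ≃ δ)
    (h : ∀ x y, dist (e x) (e y) ^ 2 = dist x y ^ 2) : γ ≃ᵢ δ :=
  ⟨e, Isometry.of_dist_eq fun x y => eq_of_sq_eq dist_nonneg dist_nonneg (h x y)⟩

def prodCongr {α' β' : Type*} [MetricSpace α'] [MetricSpace β']
    (f : α ≃ᵢ α') (g : β ≃ᵢ β') : WithLp 2 (α × β) ≃ᵢ WithLp 2 (α' × β') :=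
  isoMk ⟨fun x => WithLp.toLp 2 (f x.ofLp.1, g x.ofLp.2), fun x => WithLp.toLp 2 (f.symm x.ofLp.1, g.symm x.ofLp.2),
      fun x => by simp, fun x => by simp⟩ (by
    intro x y
    simp only [pdist_sq, Equiv.coe_fn_mk]
    rw [f.dist_eq, g.dist_eq])

def prodComm : WithLp 2 (α × β) ≃ᵢ WithLp 2 (β × α) :=
  isoMk ⟨fun x => WithLp.toLp 2 (x.ofLp.2, x.ofLp.1), fun x => WithLp.toLp 2 (x.ofLp.2, x.ofLp.1), fun x => rfl, fun x => rfl⟩ (by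
    intro x y
    simp only [pdist_sq, Equiv.coe_fn_mk]
    ring)

def prodAssoc {γ : Type*} [MetricSpace γ] :
    WithLp 2 (WithLp 2 (α × β) × γ) ≃ᵢ WithLp 2 (α × WithLp 2 (β × γ)) :=
  isoMk ⟨fun x => WithLp.toLp 2 (x.ofLp.1.ofLp.1, WithLp.toLp 2 (x.ofLp.1.ofLp.2, x.ofLp.2)), fun x => WithLp.toLp 2 (WithLp.toLp 2 (x.ofLp.1, x.ofLp.2.ofLp.1), x.ofLp.2.ofLp.2),
      fun x => rfl, fun x => rfl⟩ (by
    intro x y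
    simp only [pdist_sq, Equiv.coe_fn_mk]
    ring)

end isos
abbrev Eu (n : ℕ) : Type := EuclideanSpace ℝ (Fin n)

theorem eudist_sq {n : ℕ} (x y : Eu n) : dist x y ^ 2 = ∑ i, dist (x i) (y i) ^ 2 := by
  rw [EuclideanSpace.dist_eq, Real.sq_sqrt (by positivity)]

section eucisos
variable [MetricSpace α] [MetricSpace β]

def zeroLeft : β ≃ᵢ WithLp 2 (Eu 0 × β) :=
  isoMk ⟨fun b => WithLp.toLp 2 (0, b), fun x => x.ofLp.2, fun b => rfl, fun x => by
      refine wext ?_ rfl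
      exact Subsingleton.elim _ _⟩ (by
    intro x y
    simp only [pdist_sq, Equiv.coe_fn_mk]
    rw [eudist_sq]
    simp)

def oneIso : ℝ ≃ᵢ Eu 1 :=
  isoMk ⟨fun t => WithLp.toLp 2 (fun _ => t), fun v => v 0, fun t => rfl, fun v => by
      ext i
      have : i = 0 := Subsingleton.elim _ _
      rw [this]⟩ (by
    intro x y
    rw [eudist_sq]
    simp [Real.dist_eq])

theorem oneIso_apply (t : ℝ) (i : Fin 1) : oneIso t i = t := rfl

theorem oneIso_symm_apply (v : Eu 1) : oneIso.symm v = v 0 := rfl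

def eucSum (a b : ℕ) : WithLp 2 (Eu a × Eu b) ≃ᵢ Eu (a + b) :=
  isoMk ⟨fun x => WithLp.toLp 2 (Fin.append x.ofLp.1.ofLp x.ofLp.2.ofLp),
      fun u => WithLp.toLp 2 (WithLp.toLp 2 (fun i => u (Fin.castAdd b i)), WithLp.toLp 2 (fun j => u (Fin.natAdd a j))),
      fun x => by
        refine wext ?_ ?_ <;> ext i <;> simp [Fin.append_left, Fin.append_right],
      fun u => by
        ext i
        induction i using Fin.addCases with
        | left i => simp [Fin.append_left]
        | right i => simp [Fin.append_right]⟩ (by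
    intro x y
    simp only [pdist_sq, Equiv.coe_fn_mk, eudist_sq]
    rw [Fin.sum_univ_add]
    simp [Fin.append_left, Fin.append_right])

def eucCast {a b : ℕ} (h : a = b) : Eu a ≃ᵢ Eu b := by subst h; exact IsometryEquiv.refl _

end eucisos
open Submodule in
theorem splitOff {n : ℕ} (b : Eu (n + 1)) (hb : ‖b‖ = 1) :
    ∃ K : Eu (n + 1) ≃ᵢ WithLp 2 (ℝ × Eu n), ∀ v, (K v).ofLp.1 = ⟪b, v⟫ := by
  have hb0 : b ≠ 0 := by
    intro h; rw [h, norm_zero] at hb; norm_num at hb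
  set C : Submodule ℝ (Eu (n + 1)) := (ℝ ∙ b)ᗮ with hC
  have hrank : Module.finrank ℝ C = n := by
    have h1 : Module.finrank ℝ (ℝ ∙ b) + Module.finrank ℝ C = Module.finrank ℝ (Eu (n+1)) :=
      Submodule.finrank_add_finrank_orthogonal _
    rw [finrank_span_singleton hb0, finrank_euclideanSpace_fin] at h1
    omega
  have ob : OrthonormalBasis (Fin n) ℝ C := (stdOrthonormalBasis ℝ C).reindex (finCongr hrank)
  have hbC : ∀ c ∈ C, ⟪b, c⟫ = 0 := by
    intro c hc
    exact (Submodule.mem_orthogonal _ _).mp hc b (Submodule.mem_span_singleton_self b)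
  have h2 : ∀ v, (orthogonalProjectionOnto (ℝ ∙ b) v : Eu (n+1)) = ⟪b, v⟫ • b := by
    intro v
    rw [← starProjection_apply, starProjection_singleton, hb]
    norm_num
  have hproj : ∀ v : Eu (n+1), (⟪b, v⟫) • b + (orthogonalProjectionOnto C v : Eu (n+1)) = v := by
    intro v
    have h3 := starProjection_add_starProjection_orthogonal (K := ℝ ∙ b) v
    rw [starProjection_apply, starProjection_apply, h2 v] at h3
    exact h3
  have hprojC : ∀ (t : ℝ) (c : C),
      orthogonalProjectionOnto C (t • b + (c : Eu (n+1))) = c := by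
    intro t c
    rw [map_add, orthogonalProjection_mem_subspace_eq_self,
      Submodule.orthogonalProjectionOnto_apply_of_mem_orthogonal, zero_add]
    rw [hC, Submodule.orthogonal_orthogonal]
    exact Submodule.smul_mem _ t (Submodule.mem_span_singleton_self b)
  have hinner : ∀ (t : ℝ) (c : C), ⟪b, t • b + (c : Eu (n+1))⟫ = t := by
    intro t c
    rw [inner_add_right, real_inner_smul_right, hbC _ c.2, real_inner_self_eq_norm_sq, hb]
    ring
  refine ⟨isoMk ⟨fun v => WithLp.toLp 2 (⟪b, v⟫, ob.repr (orthogonalProjectionOnto C v)),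
      fun x => x.ofLp.1 • b + ((ob.repr.symm x.ofLp.2 : C) : Eu (n+1)), ?_, ?_⟩ ?_, fun v => rfl⟩
  · intro v
    simp only [LinearIsometryEquiv.symm_apply_apply]
    exact hproj v
  · intro x
    refine wext ?_ ?_
    · simp only
      rw [hinner]
    · simp only
      rw [hprojC]
      simp
  · intro x y
    simp only [pdist_sq, Equiv.coe_fn_mk]
    rw [LinearIsometryEquiv.dist_map, Real.dist_eq, sq_abs]
    have hPd : dist (orthogonalProjectionOnto C x) (orthogonalProjectionOnto C y)
        = ‖(orthogonalProjectionOnto C (x - y) : Eu (n+1))‖ := by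
      rw [Subtype.dist_eq, dist_eq_norm, ← Submodule.coe_sub, ← map_sub]
    rw [hPd, dist_eq_norm]
    have hd : x - y = (⟪b, x - y⟫) • b + (orthogonalProjectionOnto C (x - y) : Eu (n+1)) :=
      (hproj _).symm
    have hpy : ‖x - y‖ ^ 2 = (⟪b, x - y⟫) ^ 2 + ‖(orthogonalProjectionOnto C (x - y) : Eu (n+1))‖ ^ 2 := by
      conv_lhs => rw [hd]
      rw [norm_add_sq_real, real_inner_smul_left, hbC _ (orthogonalProjectionOnto C (x - y)).2,
        norm_smul, hb, Real.norm_eq_abs, mul_one, sq_abs]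
      ring
    rw [hpy, inner_sub_right]
/-- If an isometry between `ℝ ×₂ V` and `ℝ ×₂ Z` matches the first coordinates up to a
constant, then `V` and `Z` are isometric. -/
theorem cancel_first {V Z : Type*} [MetricSpace V] [MetricSpace Z] (c : ℝ)
    (G : WithLp 2 (ℝ × V) ≃ᵢ WithLp 2 (ℝ × Z)) (hu : ∀ x, (G x).ofLp.1 = x.ofLp.1 + c) :
    Nonempty (V ≃ᵢ Z) := by
  have h0 : ∀ v : V, (G (WithLp.toLp 2 (-c, v))).ofLp.1 = 0 := by
    intro v; rw [hu]; simp
  refine ⟨isoMk ⟨fun v => (G (WithLp.toLp 2 (-c, v))).ofLp.2, fun z => (G.symm (WithLp.toLp 2 (0, z))).ofLp.2, ?_, ?_⟩ ?_⟩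
  · intro v
    have h1 : G (WithLp.toLp 2 (-c, v)) = (WithLp.toLp 2 (0, (G (WithLp.toLp 2 (-c, v))).ofLp.2) : WithLp 2 (ℝ × Z)) := wext (h0 v) rfl
    have h2 : G.symm (WithLp.toLp 2 (0, (G (WithLp.toLp 2 (-c, v))).ofLp.2) : WithLp 2 (ℝ × Z)) = (WithLp.toLp 2 (-c, v)) := by
      rw [← h1]; exact G.symm_apply_apply _
    simp only
    rw [h2]
  · intro z
    have h1 : (G (G.symm (WithLp.toLp 2 (0, z)))).ofLp.1 = 0 := by rw [G.apply_symm_apply]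
    have h2 : (G.symm (WithLp.toLp 2 (0, z)) : WithLp 2 (ℝ × V)).ofLp.1 = -c := by
      have := hu (G.symm (WithLp.toLp 2 (0, z))); rw [h1] at this; linarith
    simp only
    have h3 : (WithLp.toLp 2 (-c, (G.symm (WithLp.toLp 2 (0, z))).ofLp.2) : WithLp 2 (ℝ × V)) = G.symm (WithLp.toLp 2 (0, z)) :=
      wext h2.symm rfl
    rw [h3, G.apply_symm_apply]
  · intro v v'
    simp only [Equiv.coe_fn_mk]
    have hG := G.dist_eq (WithLp.toLp 2 (-c, v)) (WithLp.toLp 2 (-c, v'))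
    have h1 := pdist_sq (G (WithLp.toLp 2 (-c, v))) (G (WithLp.toLp 2 (-c, v')))
    rw [hG, pdist_sq] at h1
    rw [h0, h0] at h1
    simpa using h1.symm
theorem sliceL {n : ℕ} {W Z : Type*} [MetricSpace W] [MetricSpace Z] (b : Eu (n + 1))
    (hb : ‖b‖ = 1) (c : ℝ)
    (G : WithLp 2 (Eu (n + 1) × W) ≃ᵢ WithLp 2 (ℝ × Z))
    (hu : ∀ x, (G x).ofLp.1 = ⟪b, x.ofLp.1⟫ + c) :
    Nonempty (Z ≃ᵢ WithLp 2 (Eu n × W)) := by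
  obtain ⟨K, hK⟩ := splitOff b hb
  let Θ : WithLp 2 (ℝ × WithLp 2 (Eu n × W)) ≃ᵢ WithLp 2 (Eu (n + 1) × W) :=
    (prodAssoc.symm).trans (prodCongr K.symm (IsometryEquiv.refl W))
  have hΘ1 : ∀ x : WithLp 2 (ℝ × WithLp 2 (Eu n × W)),
      (Θ x).ofLp.1 = K.symm (WithLp.toLp 2 (x.ofLp.1, x.ofLp.2.ofLp.1)) := fun x => rfl
  have hu' : ∀ x : WithLp 2 (ℝ × WithLp 2 (Eu n × W)), ((Θ.trans G) x).ofLp.1 = x.ofLp.1 + c := by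
    intro x
    have : ((Θ.trans G) x).ofLp.1 = (G (Θ x)).ofLp.1 := rfl
    rw [this, hu, hΘ1]
    have h2 : ⟪b, (K.symm (WithLp.toLp 2 (x.ofLp.1, x.ofLp.2.ofLp.1) : WithLp 2 (ℝ × Eu n)) : Eu (n+1))⟫ = x.ofLp.1 := by
      have := hK (K.symm (WithLp.toLp 2 (x.ofLp.1, x.ofLp.2.ofLp.1)))
      rw [K.apply_symm_apply] at this
      exact this.symm
    rw [h2]
  obtain ⟨e⟩ := cancel_first c (Θ.trans G) hu'
  exact ⟨e.symm⟩
theorem mid_arith {p1 p2 q1 q2 r s : ℝ} (n1 : 0 ≤ p1) (n2 : 0 ≤ p2) (n3 : 0 ≤ q1)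
    (n4 : 0 ≤ q2) (n5 : 0 ≤ r) (n6 : 0 ≤ s)
    (h1 : 4 * (p1 ^ 2 + q1 ^ 2) = r ^ 2 + s ^ 2) (h2 : 4 * (p2 ^ 2 + q2 ^ 2) = r ^ 2 + s ^ 2)
    (tr : r ≤ p1 + p2) (ts : s ≤ q1 + q2) : p1 = p2 ∧ q1 = q2 ∧ r = p1 + p2 := by
  have key : (p1 - p2) ^ 2 + (q1 - q2) ^ 2 + ((p1 + p2) ^ 2 - r ^ 2) + ((q1 + q2) ^ 2 - s ^ 2) = 0 := by
    linear_combination h1 / 2 + h2 / 2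
  have t3 : 0 ≤ (p1 + p2) ^ 2 - r ^ 2 := by
    nlinarith [mul_nonneg (sub_nonneg.2 tr) (show (0:ℝ) ≤ p1 + p2 + r by linarith)]
  have t4 : 0 ≤ (q1 + q2) ^ 2 - s ^ 2 := by
    nlinarith [mul_nonneg (sub_nonneg.2 ts) (show (0:ℝ) ≤ q1 + q2 + s by linarith)]
  have c1 : p1 = p2 := by
    have h : (p1 - p2) ^ 2 = 0 := by nlinarith [sq_nonneg (q1 - q2)]
    have := sq_eq_zero_iff.mp h
    linarith
  have c2 : q1 = q2 := by
    have h : (q1 - q2) ^ 2 = 0 := by nlinarith [sq_nonneg (p1 - p2)]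
    have := sq_eq_zero_iff.mp h
    linarith
  have c3 : r = p1 + p2 := by
    have h : (p1 + p2) ^ 2 = r ^ 2 := by nlinarith [sq_nonneg (p1 - p2), sq_nonneg (q1 - q2)]
    nlinarith
  exact ⟨c1, c2, c3⟩

/-- In an ℓ²-product with Euclidean first factor, the first coordinate of a metric
midpoint is the Euclidean midpoint. -/
theorem mid_fst {n : ℕ} {β : Type*} [MetricSpace β] (P M Q : WithLp 2 (Eu n × β))
    (h1 : 4 * dist P M ^ 2 = dist P Q ^ 2) (h2 : 4 * dist M Q ^ 2 = dist P Q ^ 2) :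
    P.ofLp.1 + Q.ofLp.1 = (2 : ℝ) • M.ofLp.1 := by
  rw [pdist_sq P M, pdist_sq P Q] at h1
  rw [pdist_sq M Q, pdist_sq P Q] at h2
  have tr : dist P.ofLp.1 Q.ofLp.1 ≤ dist P.ofLp.1 M.ofLp.1 + dist M.ofLp.1 Q.ofLp.1 := dist_triangle _ _ _
  have ts : dist P.ofLp.2 Q.ofLp.2 ≤ dist P.ofLp.2 M.ofLp.2 + dist M.ofLp.2 Q.ofLp.2 := dist_triangle _ _ _
  obtain ⟨hp, hq, hr⟩ := mid_arith dist_nonneg dist_nonneg dist_nonneg dist_nonneg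
    dist_nonneg dist_nonneg (by linarith) (by linarith) tr ts
  have hpar := parallelogram_law_with_norm ℝ (P.ofLp.1 - M.ofLp.1) (Q.ofLp.1 - M.ofLp.1)
  have hv1 : ‖P.ofLp.1 - M.ofLp.1‖ = dist P.ofLp.1 M.ofLp.1 := (dist_eq_norm _ _).symm
  have hv2 : ‖Q.ofLp.1 - M.ofLp.1‖ = dist M.ofLp.1 Q.ofLp.1 := by rw [← dist_eq_norm, dist_comm]
  have hv3 : ‖P.ofLp.1 - M.ofLp.1 - (Q.ofLp.1 - M.ofLp.1)‖ = dist P.ofLp.1 Q.ofLp.1 := by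
    rw [show P.ofLp.1 - M.ofLp.1 - (Q.ofLp.1 - M.ofLp.1) = P.ofLp.1 - Q.ofLp.1 by abel, ← dist_eq_norm]
  have hz : ‖P.ofLp.1 - M.ofLp.1 + (Q.ofLp.1 - M.ofLp.1)‖ ^ 2 = 0 := by
    rw [hv3, hv1, hv2] at hpar
    linear_combination hpar - hr * (dist P.ofLp.1 Q.ofLp.1 + dist P.ofLp.1 M.ofLp.1 + dist M.ofLp.1 Q.ofLp.1)
      + hp * (dist P.ofLp.1 M.ofLp.1 - dist M.ofLp.1 Q.ofLp.1)
  have hz2 : P.ofLp.1 - M.ofLp.1 + (Q.ofLp.1 - M.ofLp.1) = 0 :=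
    norm_eq_zero.mp (by nlinarith [norm_nonneg (P.ofLp.1 - M.ofLp.1 + (Q.ofLp.1 - M.ofLp.1))])
  have hfin : P.ofLp.1 + Q.ofLp.1 - (2:ℝ) • M.ofLp.1 = P.ofLp.1 - M.ofLp.1 + (Q.ofLp.1 - M.ofLp.1) := by
    rw [two_smul]; abel
  rw [← sub_eq_zero, hfin, hz2]

theorem affine_of_mid {n : ℕ} (f : ℝ → Eu n)
    (hmid : ∀ s t, f s + f t = (2 : ℝ) • f ((s + t) / 2))
    (hlip : ∀ s t, ‖f s - f t‖ ≤ |s - t|) :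
    ∀ t, f t = f 0 + t • (f 1 - f 0) := by
  have hadd : ∀ s t, f (s + t) - f 0 = (f s - f 0) + (f t - f 0) := by
    intro s t
    have h1 := hmid s t
    have h2 := hmid (s + t) 0
    rw [add_zero] at h2
    have h3 : f s + f t = f (s + t) + f 0 := by rw [h1, h2]
    have h4 : f (s + t) = f s + f t - f 0 := by rw [h3]; abel
    rw [h4]; abel
  let F : ℝ →+ Eu n := AddMonoidHom.mk' (fun t => f t - f 0) (fun s t => hadd s t)
  have hFc : Continuous F := by
    have hl : LipschitzWith 1 (fun t => f t - f 0) := by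
      apply LipschitzWith.of_dist_le_mul
      intro s t
      rw [dist_eq_norm, Real.dist_eq]
      simpa using hlip s t
    exact hl.continuous
  have hL : ∀ t, F t = t • F 1 := by
    intro t
    have h5 := (F.toRealLinearMap hFc).map_smul t (1 : ℝ)
    rw [smul_eq_mul, mul_one] at h5
    rw [AddMonoidHom.coe_toRealLinearMap] at h5
    exact h5
  intro t
  have h7 : f t - f 0 = t • (f 1 - f 0) := hL t
  rw [← h7]; abel
theorem inner_eucSum (a b : ℕ) (x y : WithLp 2 (Eu a × Eu b)) :
    ⟪(eucSum a b x : Eu (a + b)), eucSum a b y⟫ = ⟪x.ofLp.1, y.ofLp.1⟫ + ⟪x.ofLp.2, y.ofLp.2⟫ := by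
  rw [show ((eucSum a b) x : Eu (a + b)) = WithLp.toLp 2 (Fin.append x.ofLp.1.ofLp x.ofLp.2.ofLp) from rfl,
    show ((eucSum a b) y : Eu (a + b)) = WithLp.toLp 2 (Fin.append y.ofLp.1.ofLp y.ofLp.2.ofLp) from rfl]
  simp only [PiLp.inner_apply, RCLike.inner_apply, conj_trivial]
  rw [Fin.sum_univ_add]
  simp [Fin.append_left, Fin.append_right]

theorem lemmaL {Y Z : Type u} [MetricSpace Y] [MetricSpace Z] (k : ℕ)
    (G : WithLp 2 (Eu k × Y) ≃ᵢ WithLp 2 (ℝ × Z)) :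
    ∃ m : ℕ, k ≤ m ∧ 1 ≤ m ∧
      ∃ (W : Type u) (_ : MetricSpace W),
        Nonempty (WithLp 2 (Eu k × Y) ≃ᵢ WithLp 2 (Eu m × W)) ∧
        Nonempty (Y ≃ᵢ WithLp 2 (Eu (m - k) × W)) ∧
        Nonempty (Z ≃ᵢ WithLp 2 (Eu (m - 1) × W)) := by
  rcases isEmpty_or_nonempty Y with hY | hY
  · haveI hZ : IsEmpty Z := ⟨fun z => hY.false (G.symm (WithLp.toLp 2 (0, z))).ofLp.2⟩
    haveI h1 : IsEmpty (WithLp 2 (Eu k × Y)) := ⟨fun x => hY.false x.ofLp.2⟩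
    haveI h2 : IsEmpty (WithLp 2 (Eu (max k 1) × Y)) := ⟨fun x => hY.false x.ofLp.2⟩
    haveI h3 : IsEmpty (WithLp 2 (Eu (max k 1 - k) × Y)) := ⟨fun x => hY.false x.ofLp.2⟩
    haveI h4 : IsEmpty (WithLp 2 (Eu (max k 1 - 1) × Y)) := ⟨fun x => hY.false x.ofLp.2⟩
    exact ⟨max k 1, le_max_left _ _, le_max_right _ _, Y, inferInstance,
      ⟨isoMk (Equiv.equivOfIsEmpty _ _) (fun x y => isEmptyElim x)⟩,
      ⟨isoMk (Equiv.equivOfIsEmpty _ _) (fun x y => isEmptyElim x)⟩,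
      ⟨isoMk (Equiv.equivOfIsEmpty _ _) (fun x y => isEmptyElim x)⟩⟩
  obtain ⟨y₀⟩ := hY
  set x₀ : WithLp 2 (Eu k × Y) := (WithLp.toLp 2 ((0 : Eu k), y₀)) with hx₀_def
  set u : WithLp 2 (Eu k × Y) → ℝ := fun x => (G x).ofLp.1 with hu_def
  set q : WithLp 2 (Eu k × Y) → Z := fun x => (G x).ofLp.2 with hq_def
  have hdist : ∀ x x' : WithLp 2 (Eu k × Y),
      dist x x' ^ 2 = (u x - u x') ^ 2 + dist (q x) (q x') ^ 2 := by
    intro x x'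
    rw [← G.dist_eq x x', pdist_sq, Real.dist_eq, sq_abs]
  set φ : ℝ → WithLp 2 (Eu k × Y) → WithLp 2 (Eu k × Y) :=
    fun t x => G.symm (WithLp.toLp 2 ((G x).ofLp.1 + t, (G x).ofLp.2)) with hφ_def
  have hφu : ∀ t x, u (φ t x) = u x + t := by
    intro t x
    simp only [hφ_def, hu_def]
    rw [G.apply_symm_apply]
  have hφq : ∀ t x, q (φ t x) = q x := by
    intro t x
    simp only [hφ_def, hq_def]
    rw [G.apply_symm_apply]
  have hφ0 : ∀ x, φ 0 x = x := by
    intro x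
    simp only [hφ_def]
    rw [add_zero]
    have : (WithLp.toLp 2 ((G x).ofLp.1, (G x).ofLp.2) : WithLp 2 (ℝ × Z)) = G x := rfl
    rw [this, G.symm_apply_apply]
  have hφflow : ∀ s t x, φ s (φ t x) = φ (s + t) x := by
    intro s t x
    simp only [hφ_def]
    rw [G.apply_symm_apply]
    have : (G x).ofLp.1 + t + s = (G x).ofLp.1 + (s + t) := by ring
    rw [this]
  have hmaster : ∀ (s t : ℝ) x x', dist (φ s x) (φ t x') ^ 2
      = dist x x' ^ 2 + (s - t) ^ 2 + 2 * (s - t) * (u x - u x') := by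
    intro s t x x'
    rw [hdist (φ s x) (φ t x'), hdist x x', hφu, hφu, hφq, hφq]
    ring
  have hmidpt : ∀ x (s t : ℝ), (φ s x).ofLp.1 + (φ t x).ofLp.1 = (2:ℝ) • (φ ((s + t)/2) x).ofLp.1 := by
    intro x s t
    apply mid_fst
    · rw [hmaster s ((s+t)/2) x x, hmaster s t x x]
      rw [dist_self, sub_self]
      ring
    · rw [hmaster ((s+t)/2) t x x, hmaster s t x x]
      rw [dist_self, sub_self]
      ring
  have hlipf : ∀ x (s t : ℝ), dist (φ s x).ofLp.1 (φ t x).ofLp.1 ^ 2 + dist (φ s x).ofLp.2 (φ t x).ofLp.2 ^ 2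
      = (s - t) ^ 2 := by
    intro x s t
    have hm := hmaster s t x x
    rw [dist_self, sub_self, pdist_sq] at hm
    linarith
  have haff : ∀ x, ∃ a : Eu k, ∀ t : ℝ, (φ t x).ofLp.1 = x.ofLp.1 + t • a := by
    intro x
    have key := affine_of_mid (fun t => (φ t x).ofLp.1) (fun s t => hmidpt x s t) ?_
    · refine ⟨(φ 1 x).ofLp.1 - (φ 0 x).ofLp.1, fun t => ?_⟩
      have h := key t
      rw [hφ0] at h
      rw [hφ0]
      exact h
    · intro s t
      have h := hlipf x s t
      have h2 : dist (φ s x).ofLp.1 (φ t x).ofLp.1 ^ 2 ≤ (s - t) ^ 2 := by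
        nlinarith [sq_nonneg (dist (φ s x).ofLp.2 (φ t x).ofLp.2)]
      have h3 := le_of_sq_le (abs_nonneg (s - t)) (by rw [sq_abs]; exact h2) dist_nonneg
      rw [dist_eq_norm] at h3
      exact h3
  obtain ⟨a, ha⟩ := haff x₀
  have hconst : ∀ x (t : ℝ), (φ t x).ofLp.1 = x.ofLp.1 + t • a := by
    intro x
    obtain ⟨ax, hax⟩ := haff x
    have hbound : ∀ t : ℝ, ‖(x.ofLp.1 - x₀.ofLp.1) + t • (ax - a)‖ ≤ dist x x₀ := by
      intro t
      have hm := hmaster t t x x₀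
      rw [sub_self] at hm
      have hm2 : dist (φ t x) (φ t x₀) ^ 2 = dist x x₀ ^ 2 := by rw [hm]; ring
      have h2 := pdist_sq (φ t x) (φ t x₀)
      have h3 : dist (φ t x).ofLp.1 (φ t x₀).ofLp.1 ^ 2 ≤ dist x x₀ ^ 2 := by
        nlinarith [sq_nonneg (dist (φ t x).ofLp.2 (φ t x₀).ofLp.2)]
      rw [hax, ha, dist_eq_norm] at h3
      have h4 : x.ofLp.1 + t • ax - (x₀.ofLp.1 + t • a) = (x.ofLp.1 - x₀.ofLp.1) + t • (ax - a) := by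
        rw [smul_sub]; abel
      rw [h4] at h3
      exact le_of_sq_le dist_nonneg h3 (norm_nonneg _)
    have hax_eq : ax = a := by
      by_contra hne
      have hpos : 0 < ‖ax - a‖ := norm_pos_iff.2 (sub_ne_zero.2 hne)
      set t := (dist x x₀ + ‖x.ofLp.1 - x₀.ofLp.1‖ + 1)/‖ax - a‖ with ht_def
      have ht : 0 < t := by positivity
      have hb := hbound t
      have htri : ‖t • (ax - a)‖ - ‖x.ofLp.1 - x₀.ofLp.1‖ ≤ ‖(x.ofLp.1 - x₀.ofLp.1) + t • (ax - a)‖ := by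
        have h5 := norm_sub_le ((x.ofLp.1 - x₀.ofLp.1) + t • (ax - a)) (x.ofLp.1 - x₀.ofLp.1)
        have h6 : (x.ofLp.1 - x₀.ofLp.1) + t • (ax - a) - (x.ofLp.1 - x₀.ofLp.1) = t • (ax - a) := by abel
        rw [h6] at h5
        linarith
      have hts : ‖t • (ax - a)‖ = t * ‖ax - a‖ := by
        rw [norm_smul, Real.norm_eq_abs, abs_of_pos ht]
      have htv : t * ‖ax - a‖ = dist x x₀ + ‖x.ofLp.1 - x₀.ofLp.1‖ + 1 := by
        rw [ht_def]; field_simp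
      rw [hts, htv] at htri
      linarith
    rw [← hax_eq]
    exact hax
  have hna : ‖a‖ ≤ 1 := by
    have h := hlipf x₀ 1 0
    have h1 : dist (φ 1 x₀).ofLp.1 (φ 0 x₀).ofLp.1 = ‖a‖ := by
      rw [hconst, hconst, dist_eq_norm]
      have : x₀.ofLp.1 + (1:ℝ) • a - (x₀.ofLp.1 + (0:ℝ) • a) = a := by
        rw [one_smul, zero_smul]; abel
      rw [this]
    rw [h1] at h
    apply le_of_sq_le zero_le_one ?_ (norm_nonneg a)
    nlinarith [sq_nonneg (dist (φ 1 x₀).ofLp.2 (φ 0 x₀).ofLp.2)]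
  set τ := Real.sqrt (1 - ‖a‖^2) with hτdef
  have hτsq : τ^2 = 1 - ‖a‖^2 := Real.sq_sqrt (by nlinarith [norm_nonneg a])
  have hτnn : 0 ≤ τ := Real.sqrt_nonneg _
  set h : WithLp 2 (Eu k × Y) → ℝ := fun x => u x - ⟪a, x.ofLp.1⟫ with hh_def
  have hu_eq : ∀ x, u x = ⟪a, x.ofLp.1⟫ + h x := by
    intro x
    simp only [hh_def]
    ring
  have hI : ∀ (x x' : WithLp 2 (Eu k × Y)) (s : ℝ),
      dist (φ s x).ofLp.2 x'.ofLp.2 ^ 2 = dist x.ofLp.2 x'.ofLp.2 ^ 2 + s^2 * τ^2 + 2*s*(h x - h x') := by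
    intro x x' s
    have hm := hmaster s 0 x x'
    rw [hφ0] at hm
    rw [pdist_sq (φ s x) x', pdist_sq x x'] at hm
    have hf : dist (φ s x).ofLp.1 x'.ofLp.1 ^ 2
        = dist x.ofLp.1 x'.ofLp.1 ^ 2 + 2*s*(⟪a, x.ofLp.1⟫ - ⟪a, x'.ofLp.1⟫) + s^2*‖a‖^2 := by
      rw [hconst, dist_eq_norm, dist_eq_norm]
      rw [show x.ofLp.1 + s • a - x'.ofLp.1 = (x.ofLp.1 - x'.ofLp.1) + s • a by abel]
      rw [norm_add_sq_real, real_inner_smul_right, norm_smul, Real.norm_eq_abs]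
      rw [real_inner_comm]
      rw [inner_sub_right]
      rw [mul_pow, sq_abs]
      ring
    rw [hf] at hm
    simp only [hh_def]
    rw [hτsq]
    linear_combination hm
  have hsnd : ∀ (x x' : WithLp 2 (Eu k × Y)), x.ofLp.2 = x'.ofLp.2 → ∀ s : ℝ, (φ s x).ofLp.2 = (φ s x').ofLp.2 := by
    intro x x' hxy s
    have hm := hmaster s s x x'
    rw [sub_self] at hm
    rw [pdist_sq (φ s x) (φ s x'), pdist_sq x x'] at hm
    have h1 : dist (φ s x).ofLp.1 (φ s x').ofLp.1 = dist x.ofLp.1 x'.ofLp.1 := by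
      rw [hconst, hconst, dist_eq_norm, dist_eq_norm]
      congr 1
      abel
    have h2 : dist x.ofLp.2 x'.ofLp.2 = 0 := by rw [hxy, dist_self]
    have h3 : dist (φ s x).ofLp.2 (φ s x').ofLp.2 ^ 2 = 0 := by
      rw [h1, h2] at hm
      linarith
    exact dist_eq_zero.mp (sq_eq_zero_iff.mp h3)
  have hhy : ∀ (x x' : WithLp 2 (Eu k × Y)), x.ofLp.2 = x'.ofLp.2 → h x = h x' := by
    intro x x' hxy
    have h1 := hI x x' 1
    have h2 := hI x' x' 1
    rw [hsnd x x' hxy 1] at h1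
    have h3 : dist x.ofLp.2 x'.ofLp.2 = 0 := by rw [hxy, dist_self]
    rw [h3] at h1
    rw [dist_self] at h2
    linarith
  rcases lt_or_eq_of_le hna with hlt | heq
  case inr =>
    -- Case 1 : ‖a‖ = 1, the line is contained in the Euclidean factor
    have hτ0 : τ ^ 2 = 0 := by rw [hτsq, heq]; ring
    have hsnd0 : ∀ x (s : ℝ), (φ s x).ofLp.2 = x.ofLp.2 := by
      intro x s
      have hl := hlipf x s 0
      rw [hφ0] at hl
      have h1 : dist (φ s x).ofLp.1 x.ofLp.1 = |s| := by
        rw [hconst, dist_eq_norm]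
        rw [show x.ofLp.1 + s • a - x.ofLp.1 = s • a by abel]
        rw [norm_smul, Real.norm_eq_abs, heq, mul_one]
      rw [h1, sq_abs] at hl
      have h3 : dist (φ s x).ofLp.2 x.ofLp.2 ^ 2 = 0 := by nlinarith
      exact dist_eq_zero.mp (sq_eq_zero_iff.mp h3)
    have hconst2 : ∀ x x', h x = h x' := by
      intro x x'
      have h1 := hI x x' 1
      rw [hsnd0 x 1, hτ0] at h1
      nlinarith
    obtain ⟨n, rfl⟩ : ∃ n, k = n + 1 := by
      cases k with
      | zero =>
        exfalso
        have h0 : a = 0 := Subsingleton.elim a 0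
        rw [h0, norm_zero] at heq
        norm_num at heq
      | succ n => exact ⟨n, rfl⟩
    have hu' : ∀ x, (G x).ofLp.1 = ⟪a, x.ofLp.1⟫ + h x₀ := by
      intro x
      have h1 : (G x).ofLp.1 = u x := rfl
      rw [h1, hu_eq x, hconst2 x x₀]
    obtain ⟨eZ⟩ := sliceL a heq (h x₀) G hu'
    refine ⟨n + 1, le_refl _, by omega, Y, inferInstance, ⟨IsometryEquiv.refl _⟩, ?_, ?_⟩
    · exact ⟨zeroLeft.trans (prodCongr (eucCast (by omega)) (IsometryEquiv.refl Y))⟩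
    · exact ⟨eZ.trans (prodCongr (eucCast (by omega)) (IsometryEquiv.refl Y))⟩
  case inl =>
    -- Case 2 : ‖a‖ < 1, the space Y splits off a line
    have hτpos : 0 < τ := Real.sqrt_pos.mpr (by nlinarith [norm_nonneg a, hlt])
    have hττ : τ ≠ 0 := ne_of_gt hτpos
    set w : Y → ℝ := fun y => h (WithLp.toLp 2 ((0 : Eu k), y)) / τ with hw_def
    set ψ : ℝ → Y → Y := fun σ y => (φ (σ/τ) (WithLp.toLp 2 ((0 : Eu k), y))).ofLp.2 with hψ_def
    have hwh : ∀ y : Y, h (WithLp.toLp 2 ((0 : Eu k), y)) = τ * w y := by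
      intro y
      simp only [hw_def]
      field_simp
    have hhw : ∀ x : WithLp 2 (Eu k × Y), h x = τ * w x.ofLp.2 := by
      intro x
      exact (hhy x (WithLp.toLp 2 ((0 : Eu k), x.ofLp.2)) rfl).trans (hwh x.ofLp.2)
    have hψd : ∀ (σ : ℝ) (y y' : Y),
        dist (ψ σ y) y' ^ 2 = dist y y' ^ 2 + σ^2 + 2*σ*(w y - w y') := by
      intro σ y y'
      have h1 := hI (WithLp.toLp 2 ((0 : Eu k), y)) (WithLp.toLp 2 ((0 : Eu k), y')) (σ/τ)
      rw [hwh, hwh] at h1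
      have e1 : (σ/τ)^2*τ^2 = σ^2 := by field_simp
      have e2 : 2*(σ/τ)*(τ*w y - τ*w y') = 2*σ*(w y - w y') := by field_simp
      simp only [hψ_def]
      linear_combination h1 + e1 + e2
    have hφh : ∀ (s : ℝ) x, h (φ s x) = h x + s * τ^2 := by
      intro s x
      simp only [hh_def]
      rw [hφu, hconst, inner_add_right, real_inner_smul_right,
        real_inner_self_eq_norm_sq, hτsq]
      ring
    have hψw : ∀ (σ : ℝ) (y : Y), w (ψ σ y) = w y + σ := by
      intro σ y
      have h1 : h (WithLp.toLp 2 ((0 : Eu k), ψ σ y)) = h (φ (σ/τ) (WithLp.toLp 2 ((0 : Eu k), y))) := hhy _ _ rfl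
      have h2 := hφh (σ/τ) (WithLp.toLp 2 ((0 : Eu k), y))
      have h3 : w (ψ σ y) = h (WithLp.toLp 2 ((0 : Eu k), ψ σ y)) / τ := by simp only [hw_def]
      rw [h3, h1, h2, hwh]
      field_simp
    have hψflow : ∀ (σ σ' : ℝ) (y : Y), ψ σ (ψ σ' y) = ψ (σ + σ') y := by
      intro σ σ' y
      simp only [hψ_def]
      rw [hsnd (WithLp.toLp 2 ((0 : Eu k), (φ (σ'/τ) (WithLp.toLp 2 ((0 : Eu k), y))).ofLp.2)) (φ (σ'/τ) (WithLp.toLp 2 ((0 : Eu k), y))) rfl (σ/τ)]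
      rw [hφflow, ← add_div]
    have hψ0 : ∀ y : Y, ψ 0 y = y := by
      intro y
      simp only [hψ_def]
      rw [zero_div, hφ0]
    have hwz : ∀ (σ : ℝ) (z : {y : Y // w y = 0}), w (ψ σ z.val) = σ := by
      intro σ z
      rw [hψw, z.prop, zero_add]
    let EΨ : WithLp 2 (ℝ × {y : Y // w y = 0}) ≃ Y :=
      { toFun := fun x => ψ x.ofLp.1 x.ofLp.2.val
        invFun := fun y => WithLp.toLp 2 (w y, ⟨ψ (-(w y)) y, by rw [hψw]; ring⟩)
        left_inv := by
          intro x
          refine wext ?_ ?_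
          · simp only
            exact hwz x.ofLp.1 x.ofLp.2
          · refine Subtype.ext ?_
            simp only
            rw [hwz, hψflow, show -(x.ofLp.1) + x.ofLp.1 = (0:ℝ) by ring, hψ0]
        right_inv := by
          intro y
          simp only
          rw [hψflow, show w y + -(w y) = (0:ℝ) by ring, hψ0] }
    have hΨdist : ∀ x x' : WithLp 2 (ℝ × {y : Y // w y = 0}),
        dist (EΨ x) (EΨ x') ^ 2 = dist x x' ^ 2 := by
      intro x x'
      show dist (ψ x.ofLp.1 x.ofLp.2.val) (ψ x'.ofLp.1 x'.ofLp.2.val) ^ 2 = dist x x' ^ 2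
      rw [pdist_sq x x']
      have h1 := hψd x.ofLp.1 x.ofLp.2.val (ψ x'.ofLp.1 x'.ofLp.2.val)
      have h2 := hψd x'.ofLp.1 x'.ofLp.2.val x.ofLp.2.val
      rw [hwz, x.ofLp.2.prop] at h1
      rw [x'.ofLp.2.prop, x.ofLp.2.prop] at h2
      rw [dist_comm x.ofLp.2.val (ψ x'.ofLp.1 x'.ofLp.2.val)] at h1
      rw [h2] at h1
      rw [dist_comm x'.ofLp.2.val x.ofLp.2.val] at h1
      rw [Real.dist_eq, sq_abs, Subtype.dist_eq x.ofLp.2 x'.ofLp.2]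
      linear_combination h1
    let Ψ : WithLp 2 (ℝ × {y : Y // w y = 0}) ≃ᵢ Y := isoMk EΨ hΨdist
    let Θ : WithLp 2 (Eu (k+1) × {y : Y // w y = 0}) ≃ᵢ WithLp 2 (Eu k × Y) :=
      (prodCongr (eucSum k 1).symm (IsometryEquiv.refl _)).trans
        (prodAssoc.trans (prodCongr (IsometryEquiv.refl _)
          ((prodCongr oneIso.symm (IsometryEquiv.refl _)).trans Ψ)))
    let b : Eu (k+1) := eucSum k 1 (WithLp.toLp 2 (a, oneIso τ))
    have hbb : ‖b‖^2 = 1 := by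
      have h1 : ‖b‖^2 = ⟪b, b⟫ := (real_inner_self_eq_norm_sq b).symm
      have h2 : ⟪b, b⟫ = ⟪a, a⟫ + ⟪(oneIso τ : Eu 1), oneIso τ⟫ :=
        inner_eucSum k 1 (WithLp.toLp 2 (a, oneIso τ)) (WithLp.toLp 2 (a, oneIso τ))
      have h3 : ⟪(oneIso τ : Eu 1), oneIso τ⟫ = τ * τ := by
        simp only [PiLp.inner_apply, RCLike.inner_apply, oneIso_apply]
        simp
      rw [h1, h2, h3, real_inner_self_eq_norm_sq]
      nlinarith [hτsq]
    have hb1 : ‖b‖ = 1 := eq_of_sq_eq (norm_nonneg b) zero_le_one (by rw [hbb]; norm_num)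
    have hu' : ∀ x : WithLp 2 (Eu (k+1) × {y : Y // w y = 0}),
        ((Θ.trans G) x).ofLp.1 = ⟪b, x.ofLp.1⟫ + 0 := by
      intro x
      set p : WithLp 2 (Eu k × Eu 1) := (eucSum k 1).symm x.ofLp.1 with hp_def
      have hx1 : x.ofLp.1 = eucSum k 1 p := ((eucSum k 1).apply_symm_apply x.ofLp.1).symm
      have hTx : Θ x = (WithLp.toLp 2 (p.ofLp.1, ψ (oneIso.symm p.ofLp.2) x.ofLp.2.val) : WithLp 2 (Eu k × Y)) := rfl
      have hL : ((Θ.trans G) x).ofLp.1 = u (Θ x) := rfl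
      have hh2 : h (WithLp.toLp 2 (p.ofLp.1, ψ (oneIso.symm p.ofLp.2) x.ofLp.2.val) : WithLp 2 (Eu k × Y))
          = τ * (oneIso.symm p.ofLp.2) := by
        rw [hhw]
        show τ * w (ψ (oneIso.symm p.ofLp.2) x.ofLp.2.val) = _
        rw [hwz]
      have hR : ⟪b, x.ofLp.1⟫ = ⟪a, p.ofLp.1⟫ + ⟪(oneIso τ : Eu 1), p.ofLp.2⟫ := by
        rw [hx1]
        exact inner_eucSum k 1 (WithLp.toLp 2 (a, oneIso τ)) p
      have hR2 : ⟪(oneIso τ : Eu 1), p.ofLp.2⟫ = τ * (oneIso.symm p.ofLp.2) := by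
        simp [PiLp.inner_apply, RCLike.inner_apply, oneIso_apply, oneIso_symm_apply]
        ring
      rw [hL, hu_eq (Θ x), hTx, hh2, hR, hR2]
      show (inner ℝ a p.ofLp.1 : ℝ) + τ * (oneIso.symm p.ofLp.2) = inner ℝ a p.ofLp.1 + τ * (oneIso.symm p.ofLp.2) + 0
      ring
    obtain ⟨eZ⟩ := sliceL b hb1 0 (Θ.trans G) hu'
    refine ⟨k+1, by omega, by omega, {y : Y // w y = 0}, inferInstance, ⟨Θ.symm⟩, ?_, ?_⟩
    · exact ⟨(Ψ.symm.trans (prodCongr oneIso (IsometryEquiv.refl _))).trans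
        (prodCongr (eucCast (by omega)) (IsometryEquiv.refl _))⟩
    · exact ⟨eZ.trans (prodCongr (eucCast (by omega)) (IsometryEquiv.refl _))⟩
theorem main_aux : ∀ (l : ℕ) (X Y Z : Type u) (_ : MetricSpace X) (_ : MetricSpace Y)
    (_ : MetricSpace Z) (k : ℕ)
    (_ : X ≃ᵢ WithLp 2 (Eu k × Y)) (_ : X ≃ᵢ WithLp 2 (Eu l × Z)),
    ∃ m : ℕ, k ≤ m ∧ l ≤ m ∧ ∃ (W : Type u) (_ : MetricSpace W),
      Nonempty (X ≃ᵢ WithLp 2 (Eu m × W)) ∧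
      Nonempty (Y ≃ᵢ WithLp 2 (Eu (m - k) × W)) ∧
      Nonempty (Z ≃ᵢ WithLp 2 (Eu (m - l) × W)) := by
  intro l
  induction l with
  | zero =>
    intro X Y Z _ _ _ k e₁ e₂
    refine ⟨k, le_refl _, Nat.zero_le _, Y, inferInstance, ⟨e₁⟩, ?_, ?_⟩
    · exact ⟨zeroLeft.trans (prodCongr (eucCast (by omega)) (IsometryEquiv.refl _))⟩
    · exact ⟨((zeroLeft.trans e₂.symm).trans e₁).trans
        (prodCongr (eucCast (by omega)) (IsometryEquiv.refl _))⟩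
  | succ l ih =>
    intro X Y Z _ _ _ k e₁ e₂
    let c1 : WithLp 2 (Eu (l+1) × Z) ≃ᵢ WithLp 2 (ℝ × WithLp 2 (Eu l × Z)) :=
      (prodCongr ((eucCast (show l+1 = 1+l by omega)).trans (eucSum 1 l).symm)
        (IsometryEquiv.refl Z)).trans
        (prodAssoc.trans (prodCongr oneIso.symm (IsometryEquiv.refl _)))
    have G := (e₁.symm.trans e₂).trans c1
    obtain ⟨m₁, hk₁, h1₁, W₁, iW₁, ⟨I₁⟩, ⟨I₂⟩, ⟨I₃⟩⟩ := lemmaL k G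
    obtain ⟨m₂, hm₂a, hm₂b, W, iW, ⟨J₁⟩, ⟨J₂⟩, ⟨J₃⟩⟩ :=
      ih (WithLp 2 (Eu l × Z)) W₁ Z inferInstance iW₁ inferInstance (m₁ - 1) I₃
        (IsometryEquiv.refl _)
    refine ⟨m₂ + 1, by omega, by omega, W, iW, ?_, ?_, ?_⟩
    · exact ⟨((((e₁.trans I₁).trans (prodCongr (IsometryEquiv.refl _) J₂)).trans
        prodAssoc.symm).trans
        (prodCongr (eucSum m₁ (m₂ - (m₁ - 1))) (IsometryEquiv.refl _))).trans
        (prodCongr (eucCast (by omega)) (IsometryEquiv.refl _))⟩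
    · exact ⟨(((I₂.trans (prodCongr (IsometryEquiv.refl _) J₂)).trans prodAssoc.symm).trans
        (prodCongr (eucSum (m₁ - k) (m₂ - (m₁ - 1))) (IsometryEquiv.refl _))).trans
        (prodCongr (eucCast (by omega)) (IsometryEquiv.refl _))⟩
    · exact ⟨J₃.trans (prodCongr (eucCast (by omega)) (IsometryEquiv.refl _))⟩

/-- Kleiner–Lott, "Locally Collapsed 3-Manifolds", Lemma 4.3(2): any two
splittings of a metric space are compatible with a third splitting. -/
theorem two_splittings_compatible_with_third {X Y Z : Type u}
    [MetricSpace X] [MetricSpace Y] [MetricSpace Z]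
    (k l : ℕ)
    (e₁ : X ≃ᵢ WithLp 2 (EuclideanSpace ℝ (Fin k) × Y))
    (e₂ : X ≃ᵢ WithLp 2 (EuclideanSpace ℝ (Fin l) × Z)) :
    ∃ m : ℕ, k ≤ m ∧ l ≤ m ∧
      ∃ (W : Type u) (_ : MetricSpace W),
        Nonempty (X ≃ᵢ WithLp 2 (EuclideanSpace ℝ (Fin m) × W)) ∧
        Nonempty (Y ≃ᵢ WithLp 2 (EuclideanSpace ℝ (Fin (m - k)) × W)) ∧
        Nonempty (Z ≃ᵢ WithLp 2 (EuclideanSpace ℝ (Fin (m - l)) × W)) :=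
  main_aux l X Y Z inferInstance inferInstance inferInstance k e₁ e₂
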